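/- Each quaternion-type subspace T_k = {x ∈ Cl(Q) : involute x = (-1)^k x, reverse x = (-1)^{k(k-1)/2} x} is a submodule (R-linear subspace) of the Clifford algebra Cl(Q), and the four subspaces T_0, T_1, T_2, T_3 are independent, i.e., Cl(Q) contains their internal direct sum. -/

import Mathlib

open CliffordAlgebra

variable {R M : Type*} [CommRing R] [AddCommGroup M] [Module R M]


/-- Quaternion-type subspace `T_k` of the Clifford algebra. -/
def qtype (Q : QuadraticForm R M) (k : ℕ) : Set (CliffordAlgebra Q) :=
  {x | involute x = (-1 : CliffordAlgebra Q) ^ k * x ∧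
       reverse x = (-1 : CliffordAlgebra Q) ^ (k * (k - 1) / 2) * x}

lemma neg_one_pow_mul (Q : QuadraticForm R M) (n : ℕ) (x : CliffordAlgebra Q) :
    (-1 : CliffordAlgebra Q) ^ n * x = ((-1 : R) ^ n) • x := by
  rw [Algebra.smul_def, map_pow, map_neg, map_one]

/-- The submodule with carrier `qtype Q k`. -/
def qtypeSubmodule (Q : QuadraticForm R M) (k : ℕ) : Submodule R (CliffordAlgebra Q) where
  carrier := qtype Q k
  add_mem' := by
    rintro a b ⟨ha1, ha2⟩ ⟨hb1, hb2⟩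
    exact ⟨by simp [map_add, ha1, hb1, mul_add], by simp [map_add, ha2, hb2, mul_add]⟩
  zero_mem' := by simp [qtype]
  smul_mem' := by
    rintro c a ⟨h1, h2⟩
    exact ⟨by simp [map_smul, h1, mul_smul_comm], by simp [map_smul, h2, mul_smul_comm]⟩

/-- The projection-like operator selecting `qtype Q k`. -/
noncomputable def qP (Q : QuadraticForm R M) (k : ℕ) :
    CliffordAlgebra Q →ₗ[R] CliffordAlgebra Q :=
  LinearMap.id + ((-1 : R) ^ k) • (involute (Q := Q)).toLinearMap
    + ((-1 : R) ^ (k * (k - 1) / 2)) • (reverse (Q := Q))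
    + (((-1 : R) ^ k) * ((-1 : R) ^ (k * (k - 1) / 2))) •
        ((reverse (Q := Q)) ∘ₗ (involute (Q := Q)).toLinearMap)

lemma qP_apply_of_mem (Q : QuadraticForm R M) (k j : ℕ) {x : CliffordAlgebra Q}
    (hx : x ∈ qtype Q j) :
    qP Q k x = ((1 + (-1 : R) ^ k * (-1 : R) ^ j) *
      (1 + (-1 : R) ^ (k * (k - 1) / 2) * (-1 : R) ^ (j * (j - 1) / 2))) • x := by
  obtain ⟨h1, h2⟩ := hx
  rw [neg_one_pow_mul] at h1 h2
  have h3 : reverse (Q := Q) (involute x) = ((-1 : R) ^ j * (-1 : R) ^ (j * (j - 1) / 2)) • x := by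
    rw [h1, map_smul, h2, smul_smul]
  simp only [qP, LinearMap.add_apply, LinearMap.id_apply, LinearMap.smul_apply,
    AlgHom.toLinearMap_apply, LinearMap.comp_apply, h1, map_smul, h2, smul_smul]
  match_scalars
  ring

theorem qtype_submodule_independent (Q : QuadraticForm R M) [Invertible (2 : R)] :
    ∃ S : Fin 4 → Submodule R (CliffordAlgebra Q),
      (∀ k : Fin 4, (S k : Set (CliffordAlgebra Q)) = qtype Q k) ∧
      iSupIndep S := by
  refine ⟨fun k => qtypeSubmodule Q k, fun k => rfl, ?_⟩
  intro k
  rw [disjoint_iff_inf_le]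
  rintro x ⟨hxk, hxsup⟩
  have hker : (⨆ j, ⨆ _ : j ≠ k, qtypeSubmodule Q (j : ℕ)) ≤ LinearMap.ker (qP Q k) := by
    refine iSup_le fun j => iSup_le fun hj y hy => ?_
    rw [LinearMap.mem_ker, qP_apply_of_mem Q k j hy]
    have hc : ((1 + (-1 : R) ^ (k : ℕ) * (-1 : R) ^ (j : ℕ)) *
        (1 + (-1 : R) ^ ((k : ℕ) * ((k : ℕ) - 1) / 2) *
          (-1 : R) ^ ((j : ℕ) * ((j : ℕ) - 1) / 2))) = 0 := by
      fin_cases k <;> fin_cases j <;> simp_all <;> norm_num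
    rw [hc, zero_smul]
  have h0 : qP Q k x = 0 := hker hxsup
  have h4 : qP Q k x = (4 : R) • x := by
    rw [qP_apply_of_mem Q k k hxk]
    congr 1
    fin_cases k <;> norm_num
  have h40 : (4 : R) • x = 0 := by rw [← h4, h0]
  have h24 : (2 : R) * 2 = 4 := by norm_num
  have i4 : Invertible (4 : R) := h24 ▸ (invertibleMul (2 : R) 2)
  simp only [Submodule.mem_bot]
  calc x = ⅟(4 : R) • ((4 : R) • x) := by rw [smul_smul, invOf_mul_self, one_smul]
  _ = 0 := by rw [h40, smul_zero]
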